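/- Let Γ be a strongly induced subcomplex of Δ and e a valid edge of Γ (i.e., e is contained in no missing simplex of Γ). Then e is a valid edge of Δ, i.e., e is contained in no missing simplex of Δ. -/
import Mathlib


open scoped Classical

namespace Fary

variable {V : Type*}

/-- A simplicial complex: a family of finite sets closed under taking subsets. -/
def IsComplex (K : Set (Finset V)) : Prop := ∀ s ∈ K, ∀ t ⊆ s, t ∈ K

/-- The star of a simplex `σ`: all subsets of simplices of `K` containing `σ`. -/
def star (σ : Finset V) (K : Set (Finset V)) : Set (Finset V) :=
  {t | ∃ ρ ∈ K, σ ⊆ ρ ∧ t ⊆ ρ}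

/-- The set of faces of a single simplex `τ`. -/
def facesOf (τ : Finset V) : Set (Finset V) := {ρ | ρ ⊆ τ}

/-- `Γ` is an induced subcomplex of `Δ`. -/
def Induced (Γ Δ : Set (Finset V)) : Prop :=
  Γ ⊆ Δ ∧ ∀ s ∈ Δ, (∀ v ∈ s, {v} ∈ Γ) → s ∈ Γ

/-- `Γ` is a strongly induced subcomplex of `Δ`: for every simplex of `Δ` not in `Γ`,
the intersection of `Γ` with its star is the set of faces of a single simplex of `Γ`. -/
def StronglyInduced (Γ Δ : Set (Finset V)) : Prop :=
  Γ ⊆ Δ ∧ ∀ σ ∈ Δ, σ ∉ Γ → ∃ τ ∈ Γ, Γ ∩ star σ Δ = facesOf τ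

/-- The derived (barycentric) subdivision: its simplices are the chains (under inclusion)
of nonempty simplices of `Δ`. -/
def derived (Δ : Set (Finset V)) : Set (Finset (Finset V)) :=
  {C | (↑C : Set (Finset V)) ⊆ {s | s ∈ Δ ∧ s.Nonempty} ∧
       IsChain (· ⊆ ·) (↑C : Set (Finset V))}

/-- The biased derived subdivision of a pair `Γ ⊆ Δ`: simplices are
`τ ∪ {v_{σ₁}, …, v_{σ_k}}` with `τ ∈ Γ`, `σ₁ ⊂ … ⊂ σ_k` simplices of `Δ` not in `Γ`
and `τ ⊆ σ₁`. Old vertices are `Sum.inl`, the new vertex `v_σ` is `Sum.inr σ`. -/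
def biased [DecidableEq V] (Γ Δ : Set (Finset V)) : Set (Finset (V ⊕ Finset V)) :=
  {t | ∃ τ ∈ Γ, ∃ C : Finset (Finset V),
    (↑C : Set (Finset V)) ⊆ {s | s ∈ Δ ∧ s ∉ Γ} ∧
    IsChain (· ⊆ ·) (↑C : Set (Finset V)) ∧
    (∀ s ∈ C, τ ⊆ s) ∧
    t = τ.image Sum.inl ∪ C.image Sum.inr}

/-- The copy of a complex `Γ` over `V` inside the vertex type `V ⊕ Finset V`. -/
def inlify [DecidableEq V] (Γ : Set (Finset V)) : Set (Finset (V ⊕ Finset V)) :=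
  {t | ∃ s ∈ Γ, t = s.image Sum.inl}

/-- The vertex map of the edge contraction identifying `b` with `a`. -/
def cmap [DecidableEq V] (a b : V) (v : V) : V := if v = b then a else v

/-- The edge contraction `C_e(K)` at `e = {a,b}`: images of simplices under `cmap a b`. -/
def contract [DecidableEq V] (a b : V) (K : Set (Finset V)) : Set (Finset V) :=
  {t | ∃ s ∈ K, t = s.image (cmap a b)}

/-- A missing simplex of `K`: not a simplex, but all proper subsets are simplices. -/
def Missing (K : Set (Finset V)) (m : Finset V) : Prop := m ∉ K ∧ ∀ t ⊂ m, t ∈ K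

/-- The stellar subdivision of `Δ` at `σ`, with new vertex `none`. -/
def stellar [DecidableEq V] (σ : Finset V) (Δ : Set (Finset V)) : Set (Finset (Option V)) :=
  {t | (∃ s ∈ Δ, ¬ σ ⊆ s ∧ t = s.image some) ∨
       (∃ τ ρ : Finset V, τ ⊂ σ ∧ ρ ∩ σ = ∅ ∧ σ ∪ ρ ∈ Δ ∧
         t = insert none ((τ ∪ ρ).image some))}

/-- The edge subdivision `S_e` at the edge `e = {a,b}` is the stellar subdivision at `e`. -/
def subdivEdge [DecidableEq V] (a b : V) (K : Set (Finset V)) : Set (Finset (Option V)) :=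
  stellar {a, b} K

/-- `s` is a facet (maximal simplex) of `K`. -/
def IsFacet (K : Set (Finset V)) (s : Finset V) : Prop :=
  s ∈ K ∧ ∀ t ∈ K, s ⊆ t → t = s

end Fary

namespace Fary

/-- if `Γ` is strongly induced in `Δ` and `e` is a valid edge of `Γ`
(contained in no missing simplex of `Γ`), then `e` is contained in no missing simplex
of `Δ`. -/
theorem valid_in_ambient {V : Type*} [DecidableEq V] (Γ Δ : Set (Finset V))
    (hΓ : IsComplex Γ) (hΔ : IsComplex Δ) (hstr : StronglyInduced Γ Δ)
    (a b : V) (hab : a ≠ b) (he : ({a, b} : Finset V) ∈ Γ)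
    (hvalid : ¬ ∃ m : Finset V, Missing Γ m ∧ ({a, b} : Finset V) ⊆ m) :
    ¬ ∃ m : Finset V, Missing Δ m ∧ ({a, b} : Finset V) ⊆ m := by
  obtain ⟨hsub, hst⟩ := hstr
  have lemA : ∀ σ ∈ Δ, (∀ u ∈ σ, ({u} : Finset V) ∈ Γ) → σ ∈ Γ := by
    intro σ hσΔ hverts
    by_contra hσΓ
    obtain ⟨τ, hτΓ, heq⟩ := hst σ hσΔ hσΓ
    have hστ : σ ⊆ τ := by
      intro u hu
      have h1 : ({u} : Finset V) ∈ Γ ∩ star σ Δ :=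
        ⟨hverts u hu, σ, hσΔ, subset_refl σ, Finset.singleton_subset_iff.mpr hu⟩
      rw [heq] at h1
      exact h1 (Finset.mem_singleton_self u)
    exact hσΓ (hΓ τ hτΓ σ hστ)
  rintro ⟨m, ⟨hmΔ, hmface⟩, hem⟩
  have ham : a ∈ m := hem (by simp)
  have hbm : b ∈ m := hem (by simp)
  have haΓ : ({a} : Finset V) ∈ Γ := hΓ _ he _ (by simp)
  have hbΓ : ({b} : Finset V) ∈ Γ := hΓ _ he _ (by simp)
  have hmΓ : m ∉ Γ := fun h => hmΔ (hsub h)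
  set S : Finset V := m.filter (fun v => ({v} : Finset V) ∉ Γ) with hSdef
  rcases S.eq_empty_or_nonempty with hSe | ⟨v, hvS⟩
  · -- S empty: m is missing in Γ
    refine hvalid ⟨m, ⟨hmΓ, ?_⟩, hem⟩
    intro t ht
    refine lemA t (hmface t ht) (fun u hu => ?_)
    have hum : u ∈ m := ht.1 hu
    by_contra hc
    have : u ∈ S := by simp [hSdef, hum, hc]
    simp [hSe] at this
  · -- S nonempty
    have hvm : v ∈ m := (Finset.mem_filter.mp hvS).1
    have hvΓ : ({v} : Finset V) ∉ Γ := (Finset.mem_filter.mp hvS).2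
    have hSm : S ⊆ m := Finset.filter_subset _ _
    have haS : a ∉ S := by simp [hSdef, haΓ]
    have hbS : b ∉ S := by simp [hSdef, hbΓ]
    have hSsm : S ⊂ m := (Finset.ssubset_iff_of_subset hSm).mpr ⟨a, ham, haS⟩
    have hSΔ : S ∈ Δ := hmface S hSsm
    have hSΓ : S ∉ Γ := fun h => hvΓ (hΓ S h _ (Finset.singleton_subset_iff.mpr hvS))
    obtain ⟨τ, hτΓ, heq⟩ := hst S hSΔ hSΓ
    -- every vertex of m whose singleton is in Γ lies in τ
    have key : ∀ w ∈ m, ({w} : Finset V) ∈ Γ → w ∈ τ := by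
      intro w hwm hwΓ
      have hρm : insert w S ⊂ m := by
        refine (Finset.ssubset_iff_of_subset ?_).mpr ?_
        · intro x hx
          rcases Finset.mem_insert.mp hx with h | h
          · exact h ▸ hwm
          · exact hSm h
        · rcases eq_or_ne w a with rfl | hwa
          · exact ⟨b, hbm, by simp [hab.symm, hbS]⟩
          · exact ⟨a, ham, by simp [Ne.symm hwa, haS]⟩
      have hρΔ : insert w S ∈ Δ := hmface _ hρm
      have h1 : ({w} : Finset V) ∈ Γ ∩ star S Δ :=
        ⟨hwΓ, insert w S, hρΔ, Finset.subset_insert _ _,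
          Finset.singleton_subset_iff.mpr (Finset.mem_insert_self _ _)⟩
      rw [heq] at h1
      exact h1 (Finset.mem_singleton_self w)
    have hTτ : m \ S ⊆ τ := by
      intro w hw
      obtain ⟨hwm, hwS⟩ := Finset.mem_sdiff.mp hw
      have : ({w} : Finset V) ∈ Γ := by
        by_contra hc
        exact hwS (by simp [hSdef, hwm, hc])
      exact key w hwm this
    have hT : (m \ S) ∈ Γ ∩ star S Δ := by rw [heq]; exact hTτ
    obtain ⟨-, ρ, hρΔ, hSρ, hTρ⟩ := hT
    have hmρ : m ⊆ ρ := by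
      intro x hx
      by_cases hxS : x ∈ S
      · exact hSρ hxS
      · exact hTρ (Finset.mem_sdiff.mpr ⟨hx, hxS⟩)
    exact hmΔ (hΔ ρ hρΔ m hmρ)

end Fary
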